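/- Let 0 < b ≤ a with a + b = 2, N = 2n, and let j be an integer with 1 ≤ j < n/a. Let λ ⊢ 2n and μ, ν ⊢ n with c^λ_{μ,ν} > 0. (a) If λ_1 = N − j, then 1 − 2aj/N ≤ Eig^λ_{μ,ν} ≤ 1 − 2bj/N + (2ab/N²)·j·(j−1). (b) If λ*_1 = N − j, then −1 + 2bj/N − (2ab/N²)·j·(j−1) + (a²+b²)/N ≤ Eig^λ_{μ,ν} ≤ −1 + 2aj/N + (a²+b²)/N. -/

import Mathlib

open scoped BigOperators

noncomputable section

namespace BRT

/-- The diagonal index `Diag(λ) = Σᵢ C(λᵢ,2) − Σᵢ C(λ*ᵢ,2)` of a Young diagram. -/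
def diag (μ : YoungDiagram) : ℤ :=
  (∑ᶠ i : ℕ, ((μ.rowLen i).choose 2 : ℤ)) - ∑ᶠ i : ℕ, ((μ.colLen i).choose 2 : ℤ)

/-- Number of entries equal to `k` in the prefix of the reverse reading word of the skew
filling `T` of shape `lam/mu` ending at position `(r, j)`: the prefix consists of the rows
`< r` entirely, together with the cells of row `r` of column index `≥ j` (rows are read
right-to-left, top to bottom). -/
def prefixCount (lam mu : YoungDiagram) (T : ℕ → ℕ → ℕ) (r j k : ℕ) : ℕ :=
  (lam.cells.filter fun c =>
    c ∉ mu.cells ∧ T c.1 c.2 = k ∧ (c.1 < r ∨ (c.1 = r ∧ j ≤ c.2))).card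

/-- `T : ℕ → ℕ → ℕ` is a Littlewood–Richardson skew tableau of shape `lam/mu` and content
`nu`: it vanishes outside the skew shape, is weakly increasing along rows and strictly
increasing along columns of the skew shape, has exactly `nu_k` entries equal to `k` for
every `k`, and every prefix of its reverse reading word contains at least as many entries
equal to `k` as entries equal to `k + 1`, for every `k` (lattice word condition). -/
def IsLR (lam mu nu : YoungDiagram) (T : ℕ → ℕ → ℕ) : Prop :=
  (∀ i j : ℕ, ¬((i, j) ∈ lam ∧ (i, j) ∉ mu) → T i j = 0) ∧
  (∀ i j1 j2 : ℕ, j1 < j2 → (i, j1) ∈ lam → (i, j1) ∉ mu → (i, j2) ∈ lam → (i, j2) ∉ mu →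
    T i j1 ≤ T i j2) ∧
  (∀ i1 i2 j : ℕ, i1 < i2 → (i1, j) ∈ lam → (i1, j) ∉ mu → (i2, j) ∈ lam → (i2, j) ∉ mu →
    T i1 j < T i2 j) ∧
  (∀ k, (lam.cells.filter fun c => c ∉ mu.cells ∧ T c.1 c.2 = k).card = nu.rowLen k) ∧
  (∀ r j k, prefixCount lam mu T r j (k + 1) ≤ prefixCount lam mu T r j k)

/-- The Littlewood–Richardson coefficient `c^λ_{μ,ν}`: the number of Littlewood–Richardson
skew tableaux of shape `λ/μ` and content `ν` (and `0` if `μ ⊄ λ`). -/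
def lrCoeff (lam mu nu : YoungDiagram) : ℕ :=
  @ite _ (mu ≤ lam) (Classical.dec _) (Nat.card {T : ℕ → ℕ → ℕ // IsLR lam mu nu T}) 0

/-- The eigenvalue `Eig^λ_{μ,ν}` of the biased random transposition shuffle in the case
`|A| = |B| = n`, `N = 2n`. -/
def eig (a b : ℝ) (n : ℕ) (lam mu nu : YoungDiagram) : ℝ :=
  (a ^ 2 + b ^ 2) / (4 * (n : ℝ)) + (a ^ 2 - a * b) / (2 * (n : ℝ) ^ 2) * (diag mu : ℝ)
    + (b ^ 2 - a * b) / (2 * (n : ℝ) ^ 2) * (diag nu : ℝ)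
    + a * b / (2 * (n : ℝ) ^ 2) * (diag lam : ℝ)

lemma choose_two_add_le (x y : ℕ) : x.choose 2 + y.choose 2 ≤ (x + y).choose 2 := by
  have h : ((x.choose 2 + y.choose 2 : ℕ) : ℚ) ≤ (((x + y).choose 2 : ℕ) : ℚ) := by
    rw [Nat.cast_add, Nat.cast_choose_two, Nat.cast_choose_two, Nat.cast_choose_two]
    push_cast
    have hx : (0:ℚ) ≤ (x:ℚ) := by positivity
    have hy : (0:ℚ) ≤ (y:ℚ) := by positivity
    nlinarith [mul_nonneg hx hy]
  exact_mod_cast h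

lemma sum_choose_two_le (s : Finset ℕ) (f : ℕ → ℕ) :
    ∑ i ∈ s, (f i).choose 2 ≤ (∑ i ∈ s, f i).choose 2 := by
  induction s using Finset.cons_induction with
  | empty => simp
  | cons a s ha ih =>
    rw [Finset.sum_cons, Finset.sum_cons]
    exact le_trans (by omega) (choose_two_add_le (f a) (∑ i ∈ s, f i))

lemma choose_two_succ (x : ℕ) : (x + 1).choose 2 = x.choose 2 + x := by
  rw [Nat.choose_two_right, Nat.choose_two_right, Nat.triangle_succ]

lemma rowLen_eq_zero' (μ : YoungDiagram) {i : ℕ} (h : μ.colLen 0 ≤ i) : μ.rowLen i = 0 := by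
  by_contra hne
  have : (i, 0) ∈ μ := YoungDiagram.mem_iff_lt_rowLen.2 (Nat.pos_of_ne_zero hne)
  have := YoungDiagram.mem_iff_lt_colLen.1 this
  omega

lemma colLen_eq_zero' (μ : YoungDiagram) {i : ℕ} (h : μ.rowLen 0 ≤ i) : μ.colLen i = 0 := by
  by_contra hne
  have : (0, i) ∈ μ := YoungDiagram.mem_iff_lt_colLen.2 (Nat.pos_of_ne_zero hne)
  have := YoungDiagram.mem_iff_lt_rowLen.1 this
  omega

lemma card_eq_sum_rowLen (μ : YoungDiagram) (t : ℕ) (ht : μ.colLen 0 ≤ t) :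
    μ.card = ∑ i ∈ Finset.range t, μ.rowLen i := by
  have hcells : μ.cells = (Finset.range t).biUnion μ.row := by
    ext c
    simp only [Finset.mem_biUnion, Finset.mem_range, YoungDiagram.mem_row_iff]
    constructor
    · intro hc
      refine ⟨c.1, ?_, (μ.mem_cells c).1 hc, rfl⟩
      have h1 : (c.1, 0) ∈ μ := μ.up_left_mem le_rfl (Nat.zero_le _) ((μ.mem_cells c).1 hc)
      have := YoungDiagram.mem_iff_lt_colLen.1 h1
      omega
    · rintro ⟨i, _, hc, _⟩
      exact (μ.mem_cells c).2 hc
  rw [YoungDiagram.card, hcells, Finset.card_biUnion]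
  · exact Finset.sum_congr rfl fun i _ => (μ.rowLen_eq_card).symm
  · intro i _ j _ hij
    rw [Function.onFun, Finset.disjoint_left]
    intro c hc hc'
    rw [YoungDiagram.mem_row_iff] at hc hc'
    exact hij (hc.2 ▸ hc'.2 ▸ rfl)

lemma card_transpose (μ : YoungDiagram) : μ.transpose.card = μ.card := by
  simp [YoungDiagram.transpose, YoungDiagram.card]

lemma card_eq_sum_colLen (μ : YoungDiagram) (t : ℕ) (ht : μ.rowLen 0 ≤ t) :
    μ.card = ∑ i ∈ Finset.range t, μ.colLen i := by
  have h := card_eq_sum_rowLen μ.transpose t (by rwa [YoungDiagram.colLen_transpose])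
  rw [card_transpose] at h
  simpa [YoungDiagram.rowLen_transpose] using h

lemma diag_bounds (μ : YoungDiagram) (q k : ℕ) (hq : μ.rowLen 0 = q) (hcard : μ.card = q + k) :
    (q.choose 2 : ℤ) - k - k.choose 2 ≤ diag μ ∧ diag μ ≤ (q.choose 2 : ℤ) + k.choose 2 - k := by
  set c := μ.colLen 0 with hc
  -- row side
  have hrow : (∑ᶠ i : ℕ, ((μ.rowLen i).choose 2 : ℤ))
      = ∑ i ∈ Finset.range (c + 1), ((μ.rowLen i).choose 2 : ℤ) := by
    apply finsum_eq_sum_of_support_subset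
    intro i hi
    simp only [Function.mem_support, ne_eq] at hi
    simp only [Finset.coe_range, Set.mem_Iio]
    by_contra hlt
    rw [rowLen_eq_zero' μ (by omega)] at hi
    simp at hi
  have hrsum : ∑ i ∈ Finset.range (c + 1), μ.rowLen i = q + k := by
    rw [← card_eq_sum_rowLen μ (c + 1) (by omega), hcard]
  rw [Finset.sum_range_succ'] at hrsum
  rw [hq] at hrsum
  have hS : ∑ i ∈ Finset.range c, μ.rowLen (i + 1) = k := by omega
  have hA1 : ∑ i ∈ Finset.range c, (μ.rowLen (i + 1)).choose 2 ≤ k.choose 2 := by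
    calc ∑ i ∈ Finset.range c, (μ.rowLen (i + 1)).choose 2
        ≤ (∑ i ∈ Finset.range c, μ.rowLen (i + 1)).choose 2 := sum_choose_two_le _ _
      _ = k.choose 2 := by rw [hS]
  have hrowval : (∑ᶠ i : ℕ, ((μ.rowLen i).choose 2 : ℤ))
      = (q.choose 2 : ℤ) + ∑ i ∈ Finset.range c, ((μ.rowLen (i + 1)).choose 2 : ℤ) := by
    rw [hrow, Finset.sum_range_succ', hq]; ring
  -- column side
  have hcol : (∑ᶠ i : ℕ, ((μ.colLen i).choose 2 : ℤ))
      = ∑ i ∈ Finset.range q, ((μ.colLen i).choose 2 : ℤ) := by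
    apply finsum_eq_sum_of_support_subset
    intro i hi
    simp only [Function.mem_support, ne_eq] at hi
    simp only [Finset.coe_range, Set.mem_Iio]
    by_contra hlt
    rw [colLen_eq_zero' μ (by omega)] at hi
    simp at hi
  have hcsum : ∑ i ∈ Finset.range q, μ.colLen i = q + k := by
    rw [← card_eq_sum_colLen μ q (by omega), hcard]
  have hpos : ∀ i ∈ Finset.range q, 1 ≤ μ.colLen i := by
    intro i hi
    rw [Finset.mem_range] at hi
    have : (0, i) ∈ μ := YoungDiagram.mem_iff_lt_rowLen.2 (by omega)
    exact YoungDiagram.mem_iff_lt_colLen.1 this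
  have hgsum : ∑ i ∈ Finset.range q, (μ.colLen i - 1) = k := by
    have h1 : ∑ i ∈ Finset.range q, (μ.colLen i - 1 + 1) = ∑ i ∈ Finset.range q, μ.colLen i :=
      Finset.sum_congr rfl fun i hi => by have := hpos i hi; omega
    rw [Finset.sum_add_distrib] at h1
    simp only [Finset.sum_const, Finset.card_range, smul_eq_mul, mul_one] at h1
    omega
  have hcolsplit : ∀ i ∈ Finset.range q,
      (μ.colLen i).choose 2 = (μ.colLen i - 1).choose 2 + (μ.colLen i - 1) := by
    intro i hi
    have h1 := hpos i hi
    have := choose_two_succ (μ.colLen i - 1)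
    rw [show μ.colLen i - 1 + 1 = μ.colLen i by omega] at this
    exact this
  have hB1 : ∑ i ∈ Finset.range q, (μ.colLen i - 1).choose 2 ≤ k.choose 2 := by
    calc ∑ i ∈ Finset.range q, (μ.colLen i - 1).choose 2
        ≤ (∑ i ∈ Finset.range q, (μ.colLen i - 1)).choose 2 := sum_choose_two_le _ _
      _ = k.choose 2 := by rw [hgsum]
  have hcolval : (∑ᶠ i : ℕ, ((μ.colLen i).choose 2 : ℤ))
      = (∑ i ∈ Finset.range q, ((μ.colLen i - 1).choose 2 : ℤ)) + k := by
    rw [hcol]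
    have hcongr : ∀ i ∈ Finset.range q, ((μ.colLen i).choose 2 : ℤ)
        = ((μ.colLen i - 1).choose 2 : ℤ) + ((μ.colLen i - 1 : ℕ) : ℤ) := fun i hi => by
      exact_mod_cast hcolsplit i hi
    rw [Finset.sum_congr rfl hcongr, Finset.sum_add_distrib]
    congr 1
    rw [← Nat.cast_sum, hgsum]
  -- assemble
  have hAcast : (0:ℤ) ≤ ∑ i ∈ Finset.range c, ((μ.rowLen (i + 1)).choose 2 : ℤ) := by positivity
  have hAcast2 : ∑ i ∈ Finset.range c, ((μ.rowLen (i + 1)).choose 2 : ℤ) ≤ (k.choose 2 : ℤ) := by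
    rw [← Nat.cast_sum]
    exact_mod_cast hA1
  have hBcast : (0:ℤ) ≤ ∑ i ∈ Finset.range q, ((μ.colLen i - 1).choose 2 : ℤ) := by positivity
  have hBcast2 : ∑ i ∈ Finset.range q, ((μ.colLen i - 1).choose 2 : ℤ) ≤ (k.choose 2 : ℤ) := by
    rw [← Nat.cast_sum]
    exact_mod_cast hB1
  rw [diag, hrowval, hcolval]
  constructor <;> linarith

lemma diag_transpose (μ : YoungDiagram) : diag μ.transpose = -diag μ := by
  simp only [diag, YoungDiagram.rowLen_transpose, YoungDiagram.colLen_transpose]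
  ring

-- lattice chain

lemma pc_le_zero {lam mu nu : YoungDiagram} {T : ℕ → ℕ → ℕ} (hT : IsLR lam mu nu T)
    (r j : ℕ) : ∀ k, prefixCount lam mu T r j k ≤ prefixCount lam mu T r j 0 := by
  intro k
  induction k with
  | zero => exact le_rfl
  | succ m ih => exact le_trans (hT.2.2.2.2 r j m) ih

-- all entries of skew row 0 are 0

lemma row0_zero {lam mu nu : YoungDiagram} {T : ℕ → ℕ → ℕ} (hT : IsLR lam mu nu T)
    {c2 : ℕ} (hc : (0, c2) ∈ lam) (hnm : (0, c2) ∉ mu) : T 0 c2 = 0 := by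
  by_contra h
  have h0 : prefixCount lam mu T 0 c2 0 = 0 := by
    rw [prefixCount, Finset.card_eq_zero, Finset.filter_eq_empty_iff]
    rintro ⟨i, jj⟩ hcc
    rw [YoungDiagram.mem_cells] at hcc
    rintro ⟨hnmu, hT0, hor⟩
    dsimp only at hT0 hor
    rw [YoungDiagram.mem_cells] at hnmu
    obtain ⟨hi0, hle⟩ : i = 0 ∧ c2 ≤ jj := by omega
    subst hi0
    rcases eq_or_lt_of_le hle with heq | hlt
    · subst heq
      exact h hT0
    · have hmono := hT.2.1 0 c2 jj hlt hc hnm hcc hnmu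
      omega
  have h1 : 0 < prefixCount lam mu T 0 c2 (T 0 c2) := by
    rw [prefixCount]
    apply Finset.card_pos.mpr
    refine ⟨(0, c2), Finset.mem_filter.mpr ⟨(lam.mem_cells _).2 hc, ?_, rfl, Or.inr ⟨rfl, le_rfl⟩⟩⟩
    rw [YoungDiagram.mem_cells]
    exact hnm
  have := pc_le_zero hT 0 c2 (T 0 c2)
  omega

lemma rowLen0_le_card (μ : YoungDiagram) : μ.rowLen 0 ≤ μ.card := by
  rw [YoungDiagram.rowLen_eq_card]
  apply Finset.card_le_card
  intro c hc
  rw [YoungDiagram.mem_row_iff] at hc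
  exact (μ.mem_cells _).2 hc.1

lemma colLen0_le_card (μ : YoungDiagram) : μ.colLen 0 ≤ μ.card := by
  rw [YoungDiagram.colLen_eq_card]
  apply Finset.card_le_card
  intro c hc
  rw [YoungDiagram.mem_col_iff] at hc
  exact (μ.mem_cells _).2 hc.1

lemma row_subset {lam mu : YoungDiagram} (hle : mu ≤ lam) (i : ℕ) : mu.row i ⊆ lam.row i := by
  intro c hc
  rw [YoungDiagram.mem_row_iff] at hc ⊢
  exact ⟨YoungDiagram.cells_subset_iff.2 hle hc.1, hc.2⟩

lemma row0_skew_le {lam mu : YoungDiagram} (hle : mu ≤ lam) :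
    lam.rowLen 0 ≤ mu.rowLen 0 + (lam.cells \ mu.cells).card := by
  have hsub : lam.row 0 \ mu.row 0 ⊆ lam.cells \ mu.cells := by
    intro c hc
    rw [Finset.mem_sdiff] at hc ⊢
    obtain ⟨h1, h2⟩ := hc
    rw [YoungDiagram.mem_row_iff] at h1
    refine ⟨(lam.mem_cells _).2 h1.1, fun hmu => h2 ?_⟩
    rw [YoungDiagram.mem_row_iff]
    exact ⟨(mu.mem_cells _).1 hmu, h1.2⟩
  have := Finset.card_le_card hsub
  rw [Finset.card_sdiff_of_subset (row_subset hle 0)] at this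
  rw [YoungDiagram.rowLen_eq_card, YoungDiagram.rowLen_eq_card]
  omega

lemma col_subset {lam mu : YoungDiagram} (hle : mu ≤ lam) (j : ℕ) : mu.col j ⊆ lam.col j := by
  intro c hc
  rw [YoungDiagram.mem_col_iff] at hc ⊢
  exact ⟨YoungDiagram.cells_subset_iff.2 hle hc.1, hc.2⟩

lemma col0_skew_le {lam mu : YoungDiagram} (hle : mu ≤ lam) :
    lam.colLen 0 ≤ mu.colLen 0 + (lam.cells \ mu.cells).card := by
  have hsub : lam.col 0 \ mu.col 0 ⊆ lam.cells \ mu.cells := by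
    intro c hc
    rw [Finset.mem_sdiff] at hc ⊢
    obtain ⟨h1, h2⟩ := hc
    rw [YoungDiagram.mem_col_iff] at h1
    refine ⟨(lam.mem_cells _).2 h1.1, fun hmu => h2 ?_⟩
    rw [YoungDiagram.mem_col_iff]
    exact ⟨(mu.mem_cells _).1 hmu, h1.2⟩
  have := Finset.card_le_card hsub
  rw [Finset.card_sdiff_of_subset (col_subset hle 0)] at this
  rw [YoungDiagram.colLen_eq_card, YoungDiagram.colLen_eq_card]
  omega

lemma row0_nu {lam mu nu : YoungDiagram} {T : ℕ → ℕ → ℕ} (hT : IsLR lam mu nu T)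
    (hle : mu ≤ lam) : lam.rowLen 0 ≤ mu.rowLen 0 + nu.rowLen 0 := by
  have hcount := hT.2.2.2.1 0
  have hsub : lam.row 0 \ mu.row 0 ⊆
      lam.cells.filter fun c => c ∉ mu.cells ∧ T c.1 c.2 = 0 := by
    intro c hc
    rw [Finset.mem_sdiff] at hc
    obtain ⟨h1, h2⟩ := hc
    rw [YoungDiagram.mem_row_iff] at h1
    have hnmu : c ∉ mu := fun hmu => h2 (YoungDiagram.mem_row_iff.2 ⟨hmu, h1.2⟩)
    rw [Finset.mem_filter]
    refine ⟨(lam.mem_cells _).2 h1.1, fun hmu => hnmu ((mu.mem_cells _).1 hmu), ?_⟩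
    have hc' : (0, c.2) ∈ lam := by rw [← h1.2, Prod.mk.eta]; exact h1.1
    have hn' : (0, c.2) ∉ mu := by rw [← h1.2, Prod.mk.eta]; exact hnmu
    have := row0_zero hT hc' hn'
    rw [← h1.2] at this ⊢
    exact this
  have := Finset.card_le_card hsub
  rw [Finset.card_sdiff_of_subset (row_subset hle 0), hcount] at this
  rw [YoungDiagram.rowLen_eq_card, YoungDiagram.rowLen_eq_card]
  omega

lemma col0_nu {lam mu nu : YoungDiagram} {T : ℕ → ℕ → ℕ} (hT : IsLR lam mu nu T) :
    lam.colLen 0 ≤ mu.colLen 0 + nu.colLen 0 := by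
  set m0 := mu.colLen 0 with hm0
  set L := lam.colLen 0 with hL
  rcases le_or_gt L m0 with h | h
  · omega
  -- entries grow down the first column
  have hgrow : ∀ d : ℕ, m0 + d < L → d ≤ T (m0 + d) 0 := by
    intro d
    induction d with
    | zero => intro _; exact Nat.zero_le _
    | succ e ih =>
      intro hd
      have h1 : (m0 + e, 0) ∈ lam := YoungDiagram.mem_iff_lt_colLen.2 (by omega)
      have h2 : (m0 + e + 1, 0) ∈ lam := YoungDiagram.mem_iff_lt_colLen.2 (by omega)
      have hn1 : (m0 + e, 0) ∉ mu := fun hmem => by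
        have := YoungDiagram.mem_iff_lt_colLen.1 hmem; omega
      have hn2 : (m0 + e + 1, 0) ∉ mu := fun hmem => by
        have := YoungDiagram.mem_iff_lt_colLen.1 hmem; omega
      have hstrict := hT.2.2.1 (m0 + e) (m0 + e + 1) 0 (by omega) h1 hn1 h2 hn2
      have := ih (by omega)
      have : e + 1 ≤ T (m0 + e + 1) 0 := by omega
      simpa [Nat.add_assoc] using this
  have hv := hgrow (L - 1 - m0) (by omega)
  set v := T (m0 + (L - 1 - m0)) 0 with hvdef
  have hcell : (L - 1, 0) ∈ lam := YoungDiagram.mem_iff_lt_colLen.2 (by omega)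
  have hncell : (L - 1, 0) ∉ mu := fun hmem => by
    have := YoungDiagram.mem_iff_lt_colLen.1 hmem; omega
  have hTv : T (L - 1) 0 = v := by rw [hvdef, show m0 + (L - 1 - m0) = L - 1 by omega]
  have hnuv : 1 ≤ nu.rowLen v := by
    have hcount := hT.2.2.2.1 v
    rw [← hcount]
    apply Finset.card_pos.mpr
    refine ⟨(L - 1, 0), Finset.mem_filter.mpr ⟨(lam.mem_cells _).2 hcell, ?_, ?_⟩⟩
    · rw [YoungDiagram.mem_cells]; exact hncell
    · exact hTv
  have hmem : (v, 0) ∈ nu := YoungDiagram.mem_iff_lt_rowLen.2 (by omega)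
  have := YoungDiagram.mem_iff_lt_colLen.1 hmem
  omega

lemma diag_bounds_real (μ : YoungDiagram) (m k : ℕ) (hq : μ.rowLen 0 + k = m)
    (hcard : μ.card = m) :
    ((m:ℝ) - k) * ((m:ℝ) - k - 1) / 2 - k - (k:ℝ) * ((k:ℝ) - 1) / 2 ≤ (diag μ : ℝ) ∧
    (diag μ : ℝ) ≤ ((m:ℝ) - k) * ((m:ℝ) - k - 1) / 2 + (k:ℝ) * ((k:ℝ) - 1) / 2 - k := by
  obtain ⟨h1, h2⟩ := diag_bounds μ (μ.rowLen 0) k rfl (by omega)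
  have hcast : ((μ.rowLen 0 : ℕ) : ℝ) = (m:ℝ) - k := by
    have h : ((μ.rowLen 0 : ℕ) : ℝ) + (k:ℝ) = (m:ℝ) := by exact_mod_cast hq
    linarith
  constructor
  · have h1R : (((μ.rowLen 0).choose 2 : ℕ) : ℝ) - (k:ℝ) - ((k.choose 2 : ℕ):ℝ)
        ≤ ((diag μ : ℤ):ℝ) := by exact_mod_cast h1
    rw [Nat.cast_choose_two, Nat.cast_choose_two, hcast] at h1R
    linarith
  · have h2R : ((diag μ : ℤ):ℝ) ≤ (((μ.rowLen 0).choose 2 : ℕ) : ℝ) + ((k.choose 2 : ℕ):ℝ)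
        - (k:ℝ) := by exact_mod_cast h2
    rw [Nat.cast_choose_two, Nat.cast_choose_two, hcast] at h2R
    linarith

lemma diag_bounds_real' (μ : YoungDiagram) (m k : ℕ) (hq : μ.colLen 0 + k = m)
    (hcard : μ.card = m) :
    -(((m:ℝ) - k) * ((m:ℝ) - k - 1) / 2 + (k:ℝ) * ((k:ℝ) - 1) / 2 - k) ≤ (diag μ : ℝ) ∧
    (diag μ : ℝ) ≤ -(((m:ℝ) - k) * ((m:ℝ) - k - 1) / 2 - k - (k:ℝ) * ((k:ℝ) - 1) / 2) := by
  have hrt : μ.transpose.rowLen 0 + k = m := by rwa [YoungDiagram.rowLen_transpose]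
  obtain ⟨h1, h2⟩ := diag_bounds_real μ.transpose m k hrt (by rwa [card_transpose])
  rw [diag_transpose] at h1 h2
  push_cast at h1 h2
  constructor <;> linarith

set_option maxHeartbeats 2000000 in
/-- Let `0 < b ≤ a`, `a + b = 2`, `N = 2n`, `1 ≤ j < n/a`, and let
`λ ⊢ 2n`, `μ, ν ⊢ n` with `c^λ_{μ,ν} > 0`.
(a) If `λ₁ = N − j` then `1 − 2aj/N ≤ Eig^λ_{μ,ν} ≤ 1 − 2bj/N + (2ab/N²) j(j−1)`.
(b) If `λ*₁ = N − j` then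
`−1 + 2bj/N − (2ab/N²) j(j−1) + (a²+b²)/N ≤ Eig^λ_{μ,ν} ≤ −1 + 2aj/N + (a²+b²)/N`. -/
theorem eig_near_row_bounds (a b : ℝ) (hb : 0 < b) (hba : b ≤ a) (hab : a + b = 2)
    (n j : ℕ) (hj1 : 1 ≤ j) (hj2 : (j : ℝ) < (n : ℝ) / a)
    (lam mu nu : YoungDiagram) (hlam : lam.card = 2 * n) (hmu : mu.card = n)
    (hnu : nu.card = n) (hlr : 0 < lrCoeff lam mu nu) :
    (lam.rowLen 0 + j = 2 * n →
      1 - 2 * a * j / (2 * (n : ℝ)) ≤ eig a b n lam mu nu ∧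
      eig a b n lam mu nu ≤
        1 - 2 * b * j / (2 * (n : ℝ)) +
          2 * a * b / (2 * (n : ℝ)) ^ 2 * (j * ((j : ℝ) - 1))) ∧
    (lam.colLen 0 + j = 2 * n →
      -1 + 2 * b * j / (2 * (n : ℝ)) -
          2 * a * b / (2 * (n : ℝ)) ^ 2 * (j * ((j : ℝ) - 1)) +
          (a ^ 2 + b ^ 2) / (2 * (n : ℝ)) ≤ eig a b n lam mu nu ∧
      eig a b n lam mu nu ≤
        -1 + 2 * a * j / (2 * (n : ℝ)) + (a ^ 2 + b ^ 2) / (2 * (n : ℝ))) := by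
  have hb2 : b = 2 - a := by linarith
  subst hb2
  have ha1 : (1:ℝ) ≤ a := by linarith
  have ha2 : a < 2 := by linarith
  have ha0 : (0:ℝ) < a := by linarith
  have hj1' : (1:ℝ) ≤ (j:ℝ) := by exact_mod_cast hj1
  have haj : a * (j:ℝ) < (n:ℝ) := by
    have := (lt_div_iff₀ ha0).mp hj2
    linarith
  have hjn : (j:ℝ) < (n:ℝ) := by nlinarith
  have hn0 : (0:ℝ) < (n:ℝ) := by linarith
  have hnne : (n:ℝ) ≠ 0 := ne_of_gt hn0
  have hjnnat : j < n := by exact_mod_cast hjn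
  -- extract LR data
  have hle : mu ≤ lam := by
    by_contra hno
    rw [lrCoeff, if_neg hno] at hlr
    exact lt_irrefl 0 hlr
  obtain ⟨T, hT⟩ : ∃ T, IsLR lam mu nu T := by
    rw [lrCoeff, if_pos hle] at hlr
    obtain ⟨⟨⟨T, hT⟩⟩, -⟩ := Nat.card_pos_iff.mp hlr
    exact ⟨T, hT⟩
  have hsdcard : (lam.cells \ mu.cells).card = n := by
    rw [Finset.card_sdiff_of_subset (YoungDiagram.cells_subset_iff.2 hle)]
    have h1 : lam.cells.card = 2 * n := hlam
    have h2 : mu.cells.card = n := hmu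
    omega
  have hnat1 : lam.rowLen 0 ≤ mu.rowLen 0 + n := by
    have := row0_skew_le hle; omega
  have hnat2 : lam.rowLen 0 ≤ mu.rowLen 0 + nu.rowLen 0 := row0_nu hT hle
  have hnat3 : lam.colLen 0 ≤ mu.colLen 0 + n := by
    have := col0_skew_le hle; omega
  have hnat4 : lam.colLen 0 ≤ mu.colLen 0 + nu.colLen 0 := col0_nu hT
  have hmuR : mu.rowLen 0 ≤ n := by have := rowLen0_le_card mu; omega
  have hnuR : nu.rowLen 0 ≤ n := by have := rowLen0_le_card nu; omega
  have hmuC : mu.colLen 0 ≤ n := by have := colLen0_le_card mu; omega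
  have hnuC : nu.colLen 0 ≤ n := by have := colLen0_le_card nu; omega
  have heig : eig a (2-a) n lam mu nu = ((a^2+(2-a)^2)*(n:ℝ)
      + 2*(a^2-a*(2-a))*((diag mu : ℤ):ℝ) + 2*((2-a)^2-a*(2-a))*((diag nu : ℤ):ℝ)
      + 2*(a*(2-a))*((diag lam : ℤ):ℝ)) / (4*(n:ℝ)^2) := by
    rw [eig]; field_simp; ring
  have h4n2 : (0:ℝ) < 4*(n:ℝ)^2 := by positivity
  -- coefficient signs
  have hc1 : (0:ℝ) ≤ a^2 - a*(2-a) := by nlinarith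
  have hc2 : (0:ℝ) ≤ a*(2-a) - (2-a)^2 := by nlinarith
  have hc3 : (0:ℝ) ≤ a*(2-a) := by nlinarith
  constructor
  · -- part (a)
    intro hrow
    set km := n - mu.rowLen 0 with hkm
    set kn := n - nu.rowLen 0 with hkn
    have hkmj : km ≤ j := by omega
    have hknj : kn ≤ j := by omega
    obtain ⟨hmul, hmuu⟩ := diag_bounds_real mu n km (by omega) hmu
    obtain ⟨hnul, hnuu⟩ := diag_bounds_real nu n kn (by omega) hnu
    obtain ⟨hlaml, hlamu⟩ := diag_bounds_real lam (2*n) j (by omega) hlam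
    push_cast at hlaml hlamu
    have hx0 : (0:ℝ) ≤ (km:ℝ) := by positivity
    have hy0 : (0:ℝ) ≤ (kn:ℝ) := by positivity
    have hxj : (km:ℝ) ≤ (j:ℝ) := by exact_mod_cast hkmj
    have hyj : (kn:ℝ) ≤ (j:ℝ) := by exact_mod_cast hknj
    have p1 := mul_nonneg hc1 (sub_nonneg.mpr hmul)
    have p1u := mul_nonneg hc1 (sub_nonneg.mpr hmuu)
    have p2 := mul_nonneg hc2 (sub_nonneg.mpr hnul)
    have p2u := mul_nonneg hc2 (sub_nonneg.mpr hnuu)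
    have p3 := mul_nonneg hc3 (sub_nonneg.mpr hlaml)
    have p3u := mul_nonneg hc3 (sub_nonneg.mpr hlamu)
    have q1 : (0:ℝ) ≤ a*(n:ℝ)*(a-1)*((j:ℝ)-(km:ℝ)) := by
      apply mul_nonneg (mul_nonneg (mul_nonneg ha0.le hn0.le) (by linarith))
      linarith
    have q2 : (0:ℝ) ≤ (2-a)*(a-1)*(kn:ℝ)*((n:ℝ)+1-(kn:ℝ)) := by
      apply mul_nonneg (mul_nonneg (mul_nonneg (by linarith) (by linarith)) hy0)
      linarith
    have q3 : (0:ℝ) ≤ a*(a-1)*(km:ℝ)*((n:ℝ)+1-(km:ℝ)) := by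
      apply mul_nonneg (mul_nonneg (mul_nonneg ha0.le (by linarith)) hx0)
      linarith
    have q4 : (0:ℝ) ≤ (2-a)*(a-1)*(n:ℝ)*((j:ℝ)-(kn:ℝ)) := by
      apply mul_nonneg (mul_nonneg (mul_nonneg (by linarith) (by linarith)) hn0.le)
      linarith
    constructor
    · rw [heig, le_div_iff₀ h4n2,
        show (1 - 2*a*(j:ℝ)/(2*(n:ℝ))) * (4*(n:ℝ)^2) = 4*(n:ℝ)^2 - 4*a*(j:ℝ)*(n:ℝ) from by
          field_simp]
      nlinarith [p1, p2u, p3, q1, q2]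
    · rw [heig, div_le_iff₀ h4n2,
        show (1 - 2*(2-a)*(j:ℝ)/(2*(n:ℝ)) + 2*a*(2-a)/(2*(n:ℝ))^2 * ((j:ℝ)*((j:ℝ)-1)))
            * (4*(n:ℝ)^2)
          = 4*(n:ℝ)^2 - 4*(2-a)*(j:ℝ)*(n:ℝ) + 2*a*(2-a)*((j:ℝ)*((j:ℝ)-1)) from by
          field_simp; ring]
      nlinarith [p1u, p2, p3u, q3, q4]
  · -- part (b)
    intro hcol
    set km := n - mu.colLen 0 with hkm
    set kn := n - nu.colLen 0 with hkn
    have hkmj : km ≤ j := by omega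
    have hknj : kn ≤ j := by omega
    obtain ⟨hmul, hmuu⟩ := diag_bounds_real' mu n km (by omega) hmu
    obtain ⟨hnul, hnuu⟩ := diag_bounds_real' nu n kn (by omega) hnu
    obtain ⟨hlaml, hlamu⟩ := diag_bounds_real' lam (2*n) j (by omega) hlam
    push_cast at hlaml hlamu
    have hx0 : (0:ℝ) ≤ (km:ℝ) := by positivity
    have hy0 : (0:ℝ) ≤ (kn:ℝ) := by positivity
    have hxj : (km:ℝ) ≤ (j:ℝ) := by exact_mod_cast hkmj
    have hyj : (kn:ℝ) ≤ (j:ℝ) := by exact_mod_cast hknj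
    have p1 := mul_nonneg hc1 (sub_nonneg.mpr hmul)
    have p1u := mul_nonneg hc1 (sub_nonneg.mpr hmuu)
    have p2 := mul_nonneg hc2 (sub_nonneg.mpr hnul)
    have p2u := mul_nonneg hc2 (sub_nonneg.mpr hnuu)
    have p3 := mul_nonneg hc3 (sub_nonneg.mpr hlaml)
    have p3u := mul_nonneg hc3 (sub_nonneg.mpr hlamu)
    have q1 : (0:ℝ) ≤ a*(n:ℝ)*(a-1)*((j:ℝ)-(km:ℝ)) := by
      apply mul_nonneg (mul_nonneg (mul_nonneg ha0.le hn0.le) (by linarith))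
      linarith
    have q2 : (0:ℝ) ≤ (2-a)*(a-1)*(kn:ℝ)*((n:ℝ)+1-(kn:ℝ)) := by
      apply mul_nonneg (mul_nonneg (mul_nonneg (by linarith) (by linarith)) hy0)
      linarith
    have q3 : (0:ℝ) ≤ a*(a-1)*(km:ℝ)*((n:ℝ)+1-(km:ℝ)) := by
      apply mul_nonneg (mul_nonneg (mul_nonneg ha0.le (by linarith)) hx0)
      linarith
    have q4 : (0:ℝ) ≤ (2-a)*(a-1)*(n:ℝ)*((j:ℝ)-(kn:ℝ)) := by
      apply mul_nonneg (mul_nonneg (mul_nonneg (by linarith) (by linarith)) hn0.le)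
      linarith
    constructor
    · rw [heig, le_div_iff₀ h4n2,
        show (-1 + 2*(2-a)*(j:ℝ)/(2*(n:ℝ)) - 2*a*(2-a)/(2*(n:ℝ))^2 * ((j:ℝ)*((j:ℝ)-1))
              + (a^2+(2-a)^2)/(2*(n:ℝ))) * (4*(n:ℝ)^2)
          = -(4*(n:ℝ)^2) + 4*(2-a)*(j:ℝ)*(n:ℝ) - 2*a*(2-a)*((j:ℝ)*((j:ℝ)-1))
              + 2*(a^2+(2-a)^2)*(n:ℝ) from by
          field_simp; ring]
      nlinarith [p1, p2u, p3, q3, q4]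
    · rw [heig, div_le_iff₀ h4n2,
        show (-1 + 2*a*(j:ℝ)/(2*(n:ℝ)) + (a^2+(2-a)^2)/(2*(n:ℝ))) * (4*(n:ℝ)^2)
          = -(4*(n:ℝ)^2) + 4*a*(j:ℝ)*(n:ℝ) + 2*(a^2+(2-a)^2)*(n:ℝ) from by
          field_simp; ring]
      nlinarith [p1u, p2, p3u, q1, q2]


end BRT
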